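/- arXiv:1310.2451 — 10 statements merged into one kernel-verified Lean document; each statement's English description precedes it below -/
import Mathlib

section
/- For m > 1 and λ > 0, any minimizer f_Z over H of the m-power regularized least squares objective J lies in the linear span of the feature vectors φ_1, …, φ_n; that is, there exist real coefficients α_1, …, α_n with f_Z = ∑_{i=1}^n α_i φ_i (the representer-theorem form of the solution). -/
open scoped RealInnerProductSpace BigOperators

/-- Representer theorem form: for `m > 1` and `λ > 0`, any minimizer of the m-power
regularized least squares objective lies in the span of the feature vectors
`φ 1, …, φ n`, i.e. it can be written as `∑ i, α i • φ i`. -/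
theorem mPower_RLSR_representer
    {H : Type*} [NormedAddCommGroup H] [InnerProductSpace ℝ H] [CompleteSpace H]
    (n : ℕ) (hn : 0 < n) (φ : Fin n → H) (y : Fin n → ℝ)
    (lam m : ℝ) (hlam : 0 < lam) (hm : 1 < m)
    (fZ : H)
    (hmin : ∀ g : H,
      (1 / (n : ℝ)) * ∑ i, (y i - ⟪φ i, fZ⟫) ^ 2 + lam * ‖fZ‖ ^ m ≤
      (1 / (n : ℝ)) * ∑ i, (y i - ⟪φ i, g⟫) ^ 2 + lam * ‖g‖ ^ m) :
    ∃ α : Fin n → ℝ, fZ = ∑ i, α i • φ i := by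
  set K : Submodule ℝ H := Submodule.span ℝ (Set.range φ) with hK
  haveI : FiniteDimensional ℝ K := FiniteDimensional.span_of_finite ℝ (Set.finite_range φ)
  set p : H := (Submodule.orthogonalProjectionOnto K fZ : H) with hp
  have hpK : p ∈ K := (Submodule.orthogonalProjectionOnto K fZ).2
  have hv : fZ - p ∈ Kᗮ := Submodule.sub_starProjection_mem_orthogonal (K := K) fZ
  have hinner : ∀ i, ⟪φ i, fZ⟫ = ⟪φ i, p⟫ := by
    intro i
    have h1 : ⟪φ i, fZ - p⟫ = 0 := hv (φ i) (Submodule.subset_span ⟨i, rfl⟩)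
    rw [inner_sub_right] at h1; linarith
  have hortho : ⟪p, fZ - p⟫ = 0 := Submodule.inner_right_of_mem_orthogonal hpK hv
  have hnormsq : ‖fZ‖ ^ 2 = ‖p‖ ^ 2 + ‖fZ - p‖ ^ 2 := by
    have := norm_add_sq_real p (fZ - p)
    rw [hortho] at this
    simpa using this
  have hsum : ∑ i, (y i - ⟪φ i, fZ⟫) ^ 2 = ∑ i, (y i - ⟪φ i, p⟫) ^ 2 :=
    Finset.sum_congr rfl fun i _ => by rw [hinner i]
  have hle := hmin p
  rw [hsum] at hle
  have h1 : ‖fZ‖ ^ m ≤ ‖p‖ ^ m := le_of_mul_le_mul_left (by linarith) hlam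
  have h2 : ‖fZ‖ ≤ ‖p‖ := by
    by_contra h
    push_neg at h
    exact absurd h1 (not_le.2 (Real.rpow_lt_rpow (norm_nonneg p) h (by linarith)))
  have h3 : ‖fZ - p‖ = 0 := by
    nlinarith [norm_nonneg (fZ - p), norm_nonneg p, norm_nonneg fZ]
  have hfp : fZ = p := sub_eq_zero.mp (norm_eq_zero.mp h3)
  have hmem : fZ ∈ K := hfp ▸ hpK
  rw [hK] at hmem
  obtain ⟨α, hα⟩ := (Submodule.mem_span_range_iff_exists_fun ℝ).1 hmem
  exact ⟨α, hα.symm⟩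
end

section
/- For m > 1 and λ > 0, if f_Z minimizes the m-power regularized least squares objective J over H and f_Z ≠ 0, then f_Z satisfies the first-order stationarity identity λ·m·n·‖f_Z‖^{m−2}·f_Z = ∑_{i=1}^n 2·(y_i − ⟨φ_i, f_Z⟩)·φ_i; equivalently, f_Z = ∑_{i=1}^n [2·(y_i − ⟨φ_i, f_Z⟩)/(λ·m·n·‖f_Z‖^{m−2})]·φ_i. -/
open scoped RealInnerProductSpace BigOperators

/-- First-order stationarity: for `m > 1` and `λ > 0`, if `fZ` minimizes the m-power
regularized least squares objective over `H` and `fZ ≠ 0`, then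
`λ·m·n·‖fZ‖^(m−2) • fZ = ∑ i, 2·(y i − ⟪φ i, fZ⟫) • φ i`; equivalently,
`fZ = ∑ i, (2·(y i − ⟪φ i, fZ⟫)/(λ·m·n·‖fZ‖^(m−2))) • φ i`. -/
theorem mPower_RLSR_stationarity
    {H : Type*} [NormedAddCommGroup H] [InnerProductSpace ℝ H] [CompleteSpace H]
    (n : ℕ) (hn : 0 < n) (φ : Fin n → H) (y : Fin n → ℝ)
    (lam m : ℝ) (hlam : 0 < lam) (hm : 1 < m)
    (fZ : H) (hne : fZ ≠ 0)
    (hmin : ∀ g : H,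
      (1 / (n : ℝ)) * ∑ i, (y i - ⟪φ i, fZ⟫) ^ 2 + lam * ‖fZ‖ ^ m ≤
      (1 / (n : ℝ)) * ∑ i, (y i - ⟪φ i, g⟫) ^ 2 + lam * ‖g‖ ^ m) :
    (lam * m * n * ‖fZ‖ ^ (m - 2)) • fZ = ∑ i, (2 * (y i - ⟪φ i, fZ⟫)) • φ i ∧
    fZ = ∑ i, (2 * (y i - ⟪φ i, fZ⟫) / (lam * m * n * ‖fZ‖ ^ (m - 2))) • φ i := by
  have hnorm : (0:ℝ) < ‖fZ‖ := norm_pos_iff.2 hne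
  have hkey : ∀ g : H, (⟪g, g⟫ : ℝ) ^ (m/2) = ‖g‖ ^ m := by
    intro g
    rw [real_inner_self_eq_norm_sq, ← Real.rpow_natCast ‖g‖ 2,
      ← Real.rpow_mul (norm_nonneg g)]
    norm_num
    congr 1
    ring
  -- derivative
  have h1 : ∀ i : Fin n, HasFDerivAt (fun g : H => (y i - ⟪φ i, g⟫) ^ 2)
      (((2:ℝ) * (y i - ⟪φ i, fZ⟫)^1) • (0 - innerSL ℝ (φ i))) fZ := by
    intro i
    have hb : HasFDerivAt (fun g : H => y i - ⟪φ i, g⟫) (0 - innerSL ℝ (φ i)) fZ :=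
      (hasFDerivAt_const (y i) fZ).sub (innerSL ℝ (φ i)).hasFDerivAt
    have := (hasDerivAt_pow 2 (y i - ⟪φ i, fZ⟫)).comp_hasFDerivAt fZ hb
    simpa [Function.comp_def] using this
  have hq : HasFDerivAt (fun g : H => ⟪g, g⟫)
      ((fderivInnerCLM ℝ (fZ, fZ)).comp
        ((ContinuousLinearMap.id ℝ H).prod (ContinuousLinearMap.id ℝ H))) fZ :=
    (hasFDerivAt_id fZ).inner ℝ (hasFDerivAt_id fZ)
  have hx : (⟪fZ, fZ⟫ : ℝ) ≠ 0 := by simpa [inner_self_eq_zero] using hne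
  have hr : HasDerivAt (fun t : ℝ => t ^ (m/2)) (m/2 * ⟪fZ, fZ⟫ ^ (m/2 - 1)) ⟪fZ, fZ⟫ :=
    Real.hasDerivAt_rpow_const (Or.inl hx)
  have h2 := hr.comp_hasFDerivAt_of_eq fZ hq rfl
  have h3 := ((HasFDerivAt.fun_sum (fun i (_ : i ∈ Finset.univ) => h1 i)).const_mul
    (1/(n:ℝ))).add (h2.const_mul lam)
  have hloc : IsLocalMin (fun g : H => 1 / (n:ℝ) * ∑ i, (y i - ⟪φ i, g⟫) ^ 2 +
      lam * ((fun t : ℝ => t ^ (m/2)) ∘ fun g : H => ⟪g, g⟫) g) fZ := by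
    apply Filter.Eventually.of_forall
    intro g
    simpa only [Function.comp, hkey] using hmin g
  have h0 := hloc.hasFDerivAt_eq_zero h3
  -- rewrite the power of the inner product
  have hpow : (⟪fZ, fZ⟫ : ℝ) ^ (m/2 - 1) = ‖fZ‖ ^ (m - 2) := by
    rw [real_inner_self_eq_norm_sq, ← Real.rpow_natCast ‖fZ‖ 2,
      ← Real.rpow_mul (norm_nonneg fZ)]
    norm_num
    congr 1
    ring
  have hv : ∀ v : H, (lam * m * n * ‖fZ‖ ^ (m - 2)) * ⟪fZ, v⟫ =
      ∑ i, (2 * (y i - ⟪φ i, fZ⟫)) * ⟪φ i, v⟫ := by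
    intro v
    have := DFunLike.congr_fun h0 v
    simp only [ContinuousLinearMap.add_apply, ContinuousLinearMap.smul_apply,
      ContinuousLinearMap.coe_sum', Finset.sum_apply, ContinuousLinearMap.zero_apply,
      ContinuousLinearMap.comp_apply, ContinuousLinearMap.prod_apply,
      ContinuousLinearMap.coe_id', id, fderivInnerCLM_apply, innerSL_apply_apply,
      ContinuousLinearMap.sub_apply, hpow, smul_eq_mul, pow_one,
      ContinuousLinearMap.zero_apply] at this
    have hsym : (⟪fZ, v⟫ : ℝ) + ⟪v, fZ⟫ = 2 * ⟪fZ, v⟫ := by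
      rw [real_inner_comm v fZ]; ring
    rw [hsym] at this
    have hn' : (n:ℝ) ≠ 0 := Nat.cast_ne_zero.2 hn.ne'
    field_simp at this ⊢
    simp only [zero_sub, mul_neg, Finset.sum_neg_distrib, mul_zero] at this
    nlinarith [this]
  have hmain : (lam * m * n * ‖fZ‖ ^ (m - 2)) • fZ = ∑ i, (2 * (y i - ⟪φ i, fZ⟫)) • φ i := by
    set w := (lam * m * n * ‖fZ‖ ^ (m - 2)) • fZ - ∑ i, (2 * (y i - ⟪φ i, fZ⟫)) • φ i with hw
    have hwv : ∀ v : H, (⟪w, v⟫ : ℝ) = 0 := by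
      intro v
      rw [hw, inner_sub_left, inner_smul_left, sum_inner]
      simp only [inner_smul_left, RCLike.conj_to_real, conj_trivial]
      rw [hv v]
      ring
    have := hwv w
    rw [inner_self_eq_zero] at this
    exact sub_eq_zero.1 (hw ▸ this)
  refine ⟨hmain, ?_⟩
  have hc : (lam * m * n * ‖fZ‖ ^ (m - 2)) ≠ 0 := by
    have := Real.rpow_pos_of_pos hnorm (m - 2)
    positivity
  calc fZ = (lam * m * n * ‖fZ‖ ^ (m - 2))⁻¹ • ((lam * m * n * ‖fZ‖ ^ (m - 2)) • fZ) := by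
        rw [smul_smul, inv_mul_cancel₀ hc, one_smul]
    _ = ∑ i, (2 * (y i - ⟪φ i, fZ⟫) / (lam * m * n * ‖fZ‖ ^ (m - 2))) • φ i := by
        rw [hmain, Finset.smul_sum]
        refine Finset.sum_congr rfl fun i _ => ?_
        rw [smul_smul, div_eq_inv_mul]
end

section
/- (Theorem 1) Let m > 1 and assume ∑_{i=1}^n d_i·(y'_i)² > 0. For C_0 > 0, define the vector α = Q·α' where α'_i = 2·y'_i/(2·d_i + λ·m·n·C_0) for each 1 ≤ i ≤ n. Then α is a global minimizer of the dual objective G(a) = (Y − K a)ᵀ(Y − K a) + n·λ·(aᵀ K a)^{m/2} if and only if C_0 is a root of the function F, i.e. F(C_0) = (∑_{i=1}^n 4·d_i·(y'_i)²/(2·d_i + λ·m·n·C_0)²)^{m/2 − 1} − C_0 = 0. -/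
open Matrix
open scoped BigOperators

lemma tangent_rpow {m s p : ℝ} (hm : 1 ≤ m) (hs : 0 < s) (hp : 0 ≤ p) :
    s ^ m + m * s ^ (m - 1) * (p - s) ≤ p ^ m := by
  have hx : (-1 : ℝ) ≤ p / s - 1 := by
    have : 0 ≤ p / s := div_nonneg hp hs.le
    linarith
  have h := one_add_mul_self_le_rpow_one_add hx hm
  rw [add_sub_cancel] at h
  rw [Real.div_rpow hp hs.le] at h
  have hsm : 0 < s ^ m := Real.rpow_pos_of_pos hs m
  have h2 : (1 + m * (p / s - 1)) * s ^ m ≤ p ^ m := by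
    calc (1 + m * (p / s - 1)) * s ^ m ≤ (p ^ m / s ^ m) * s ^ m :=
          mul_le_mul_of_nonneg_right h hsm.le
      _ = p ^ m := div_mul_cancel₀ _ (ne_of_gt hsm)
  have hsm1 : s ^ m = s ^ (m - 1) * s := by
    rw [← Real.rpow_add_one hs.ne' (m - 1)]
    ring_nf
  have key : (1 + m * (p / s - 1)) * s ^ m = s ^ m + m * s ^ (m - 1) * (p - s) := by
    rw [hsm1]
    field_simp
  linarith [key ▸ h2]

lemma norm_pow_tangent {m S T W : ℝ} (hm : 1 < m) (hS : 0 < S) (hT : 0 ≤ T)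
    (hW : W ^ 2 ≤ S * T) :
    S ^ (m / 2) + m * S ^ (m / 2 - 1) * (W - S) ≤ T ^ (m / 2) := by
  have hTm : 0 ≤ T ^ (m / 2) := Real.rpow_nonneg hT _
  have hSm : 0 < S ^ (m / 2) := Real.rpow_pos_of_pos hS _
  have hSm1 : 0 < S ^ (m / 2 - 1) := Real.rpow_pos_of_pos hS _
  have hSS : S ^ (m / 2 - 1) * S = S ^ (m / 2) := by
    rw [← Real.rpow_add_one hS.ne' (m / 2 - 1)]
    ring_nf
  rcases lt_or_ge W 0 with hWneg | hWpos
  · have h1 : m * S ^ (m / 2 - 1) * (W - S) ≤ m * S ^ (m / 2 - 1) * (0 - S) := by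
      have hm0 : (0:ℝ) < m := by linarith
      apply mul_le_mul_of_nonneg_left (by linarith) (by positivity)
    have h2 : m * S ^ (m / 2 - 1) * (0 - S) = -(m * S ^ (m / 2)) := by
      rw [← hSS]; ring
    nlinarith
  · have hsS : 0 < Real.sqrt S := Real.sqrt_pos.mpr hS
    set s := Real.sqrt S with hs_def
    set p := W / s with hp_def
    have hppos : 0 ≤ p := div_nonneg hWpos hsS.le
    have ht := tangent_rpow (le_of_lt hm) hsS hppos
    have hsm : s ^ m = S ^ (m / 2) := by
      rw [hs_def, Real.sqrt_eq_rpow, ← Real.rpow_mul hS.le]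
      ring_nf
    have hsm1' : s ^ (m - 1) = S ^ ((m - 1) / 2) := by
      rw [hs_def, Real.sqrt_eq_rpow, ← Real.rpow_mul hS.le]
      ring_nf
    have hs2 : s * s = S := Real.mul_self_sqrt hS.le
    have hmid : m * s ^ (m - 1) * (p - s) = m * S ^ (m / 2 - 1) * (W - S) := by
      have hps : p - s = (W - S) / s := by
        rw [hp_def]
        field_simp
        linarith [hs2]
      have h3 : s ^ (m - 1) / s = S ^ (m / 2 - 1) := by
        rw [hsm1', hs_def, Real.sqrt_eq_rpow, ← Real.rpow_sub hS]
        congr 1; ring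
      rw [hps, ← h3]
      ring
    have hpm : p ^ m ≤ T ^ (m / 2) := by
      have hWle : W ≤ Real.sqrt (S * T) := by
        rw [Real.le_sqrt hWpos (by positivity)]
        exact hW
      have hple : p ≤ Real.sqrt T := by
        rw [hp_def, div_le_iff₀ hsS]
        calc W ≤ Real.sqrt (S * T) := hWle
          _ = Real.sqrt T * s := by rw [hs_def, Real.sqrt_mul hS.le]; ring
      calc p ^ m ≤ (Real.sqrt T) ^ m :=
            Real.rpow_le_rpow hppos hple (by linarith)
        _ = T ^ (m / 2) := by
          rw [Real.sqrt_eq_rpow, ← Real.rpow_mul hT]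
          ring_nf
    rw [hsm, hmid] at ht
    linarith

/-- Theorem 1: with `K = Q D Qᵀ` (Q orthogonal, D = diagonal d ≥ 0), `y' = Qᵀ Y`,
`m > 1`, `∑ d i (y' i)² > 0`, `C₀ > 0`, and `α = Q α'` where
`α' i = 2 y' i / (2 d i + λ m n C₀)`, the vector `α` is a global minimizer of the dual
objective `G(a) = (Y − K a)ᵀ (Y − K a) + n λ (aᵀ K a)^{m/2}` if and only if
`F(C₀) = (∑ i, 4 d i (y' i)² / (2 d i + λ m n C₀)²)^{m/2 − 1} − C₀ = 0`. -/
theorem mPower_RLSR_dual_solution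
    (n : ℕ) (hn : 0 < n)
    (K Q : Matrix (Fin n) (Fin n) ℝ) (d : Fin n → ℝ) (Y : Fin n → ℝ)
    (lam m : ℝ) (hlam : 0 < lam) (hm : 1 < m)
    (hQ : Qᵀ * Q = 1) (hK : K = Q * Matrix.diagonal d * Qᵀ) (hd : ∀ i, 0 ≤ d i)
    (y' : Fin n → ℝ) (hy' : y' = Qᵀ.mulVec Y)
    (hpos : 0 < ∑ i, d i * (y' i) ^ 2)
    (C₀ : ℝ) (hC₀ : 0 < C₀)
    (α' : Fin n → ℝ) (hα' : ∀ i, α' i = 2 * y' i / (2 * d i + lam * m * n * C₀))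
    (α : Fin n → ℝ) (hα : α = Q.mulVec α') :
    (∀ b : Fin n → ℝ,
        (Y - K.mulVec α) ⬝ᵥ (Y - K.mulVec α) + n * lam * (α ⬝ᵥ K.mulVec α) ^ (m / 2) ≤
        (Y - K.mulVec b) ⬝ᵥ (Y - K.mulVec b) + n * lam * (b ⬝ᵥ K.mulVec b) ^ (m / 2)) ↔
    (∑ i, 4 * d i * (y' i) ^ 2 / (2 * d i + lam * m * n * C₀) ^ 2) ^ (m / 2 - 1) - C₀ = 0 := by
  have hn' : (0:ℝ) < n := Nat.cast_pos.mpr hn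
  have hm0 : (0:ℝ) < m := by linarith
  set L := lam * m * (n:ℝ) * C₀ with hL_def
  have hL : 0 < L := by positivity
  have he : ∀ i, 0 < 2 * d i + L := fun i => by have := hd i; linarith
  have hQQt : Q * Qᵀ = 1 := mul_eq_one_comm.mp hQ
  have hdot : ∀ x z : Fin n → ℝ, Q.mulVec x ⬝ᵥ Q.mulVec z = x ⬝ᵥ z := by
    intro x z
    rw [Matrix.dotProduct_mulVec, ← Matrix.mulVec_transpose, Matrix.mulVec_mulVec, hQ,
      Matrix.one_mulVec]
  have hKQ : ∀ w : Fin n → ℝ, K.mulVec (Q.mulVec w) = Q.mulVec (fun i => d i * w i) := by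
    intro w
    rw [Matrix.mulVec_mulVec, hK]
    have h1 : Q * Matrix.diagonal d * Qᵀ * Q = Q * Matrix.diagonal d := by
      rw [Matrix.mul_assoc (Q * Matrix.diagonal d), hQ, Matrix.mul_one]
    rw [h1, ← Matrix.mulVec_mulVec,
      show Matrix.diagonal d *ᵥ w = fun i => d i * w i from
        funext fun i => Matrix.mulVec_diagonal d w i]
  have hYQ : Q.mulVec y' = Y := by
    rw [hy', Matrix.mulVec_mulVec, hQQt, Matrix.one_mulVec]
  have hGquad : ∀ w : Fin n → ℝ,
      (Y - K.mulVec (Q.mulVec w)) ⬝ᵥ (Y - K.mulVec (Q.mulVec w))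
        = ∑ i, (y' i - d i * w i) ^ 2 := by
    intro w
    rw [hKQ, ← hYQ, ← Matrix.mulVec_sub, hdot]
    simp only [dotProduct, Pi.sub_apply]
    exact Finset.sum_congr rfl fun i _ => by ring
  have hGreg : ∀ w : Fin n → ℝ,
      Q.mulVec w ⬝ᵥ K.mulVec (Q.mulVec w) = ∑ i, d i * (w i) ^ 2 := by
    intro w
    rw [hKQ, hdot]
    simp only [dotProduct]
    exact Finset.sum_congr rfl fun i _ => by ring
  set S := ∑ i, d i * (α' i) ^ 2 with hS_def
  have hSsum : (∑ i, 4 * d i * (y' i) ^ 2 / (2 * d i + L) ^ 2) = S := by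
    rw [hS_def]
    refine Finset.sum_congr rfl fun i _ => ?_
    rw [hα' i]
    have h := (he i).ne'
    field_simp
    ring
  have hSpos : 0 < S := by
    obtain ⟨i, hi⟩ : ∃ i, 0 < d i * (y' i) ^ 2 := by
      by_contra h
      push_neg at h
      have : ∑ i, d i * (y' i) ^ 2 ≤ 0 := Finset.sum_nonpos fun i _ => h i
      linarith
    have hdpos : 0 < d i := by
      rcases eq_or_lt_of_le (hd i) with h0 | h0
      · rw [← h0] at hi; simp at hi
      · exact h0
    have hyne : y' i ≠ 0 := by
      intro h0; rw [h0] at hi; simp at hi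
    have hterm : 0 < d i * (α' i) ^ 2 := by
      have hne : α' i ≠ 0 := by
        rw [hα' i]
        exact div_ne_zero (mul_ne_zero two_ne_zero hyne) (he i).ne'
      exact mul_pos hdpos (lt_of_le_of_ne (sq_nonneg _) (Ne.symm (pow_ne_zero 2 hne)))
    exact lt_of_lt_of_le hterm
      (Finset.single_le_sum (f := fun j => d j * (α' j) ^ 2)
        (fun j _ => mul_nonneg (hd j) (sq_nonneg _)) (Finset.mem_univ i))
  have hkey : ∀ i, d i * α' i - y' i = -(L / 2) * α' i := by
    intro i
    rw [hα' i]
    have h := (he i).ne'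
    linear_combination (y' i) * mul_inv_cancel₀ h
  rw [hSsum, hα]
  constructor
  · -- minimizer ⇒ stationarity
    intro hmin
    set H : ℝ → ℝ :=
      fun c => (∑ i, (y' i - c * (d i * α' i)) ^ 2) + ↑n * lam * ((c ^ 2 * S) ^ (m / 2))
      with hH_def
    have hHc : ∀ c, H 1 ≤ H c := by
      intro c
      have h := hmin (Q.mulVec (fun i => c * α' i))
      rw [hGquad, hGreg, hGquad, hGreg] at h
      have e1 : ∑ i, d i * (c * α' i) ^ 2 = c ^ 2 * S := by
        rw [hS_def, Finset.mul_sum]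
        exact Finset.sum_congr rfl fun i _ => by ring
      have hH1 : H 1 = ∑ i, (y' i - d i * α' i) ^ 2 + ↑n * lam * S ^ (m / 2) := by
        simp only [hH_def, one_pow, one_mul]
      have hHcv : H c = ∑ i, (y' i - d i * (c * α' i)) ^ 2
          + ↑n * lam * (∑ i, d i * (c * α' i) ^ 2) ^ (m / 2) := by
        simp only [hH_def]
        rw [e1]
        congr 1
        exact Finset.sum_congr rfl fun i _ => by ring
      rw [hH1, hHcv]
      exact h
    have hloc : IsLocalMin H 1 := Filter.Eventually.of_forall hHc
    have hd1 : HasDerivAt (fun c : ℝ => ∑ i, (y' i - c * (d i * α' i)) ^ 2)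
        (∑ i, (2:ℝ) * (y' i - 1 * (d i * α' i)) ^ 1 * (-(1 * (d i * α' i)))) 1 := by
      apply HasDerivAt.fun_sum
      intro i _
      have hf : HasDerivAt (fun c : ℝ => y' i - c * (d i * α' i)) (-(1 * (d i * α' i))) 1 :=
        ((hasDerivAt_id (1:ℝ)).mul_const (d i * α' i)).const_sub (y' i)
      simpa using hf.fun_pow 2
    have hd2 : HasDerivAt (fun c : ℝ => ↑n * lam * ((c ^ 2 * S) ^ (m / 2)))
        (↑n * lam * ((2 * (1:ℝ) ^ 1 * S) * (m / 2) * ((1:ℝ) ^ 2 * S) ^ (m / 2 - 1))) 1 := by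
      have hg : HasDerivAt (fun c : ℝ => c ^ 2 * S) (2 * (1:ℝ) ^ 1 * S) 1 := by
        simpa using (hasDerivAt_pow 2 (1:ℝ)).mul_const S
      have := hg.rpow_const (p := m / 2) (Or.inl (by simp; positivity))
      exact this.const_mul (↑n * lam)
    have htot := hd1.add hd2
    have hz := hloc.hasDerivAt_eq_zero htot
    have hD1 : (∑ i, (2:ℝ) * (y' i - 1 * (d i * α' i)) ^ 1 * (-(1 * (d i * α' i))))
        = -(L * S) := by
      rw [hS_def, Finset.mul_sum, ← Finset.sum_neg_distrib]
      refine Finset.sum_congr rfl fun i _ => ?_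
      have h := hkey i
      linear_combination (2 * d i * α' i) * h
    rw [hD1] at hz
    simp only [one_pow, pow_one, mul_one, one_mul] at hz
    have hne : (↑n : ℝ) * lam * m * S ≠ 0 := by positivity
    have : (↑n : ℝ) * lam * m * S * (S ^ (m / 2 - 1) - C₀) = 0 := by
      simp only [hL_def] at hz
      linear_combination hz
    have h0 := (mul_eq_zero.mp this).resolve_left hne
    linarith
  · -- stationarity ⇒ minimizer
    intro hF b
    have hFC : S ^ (m / 2 - 1) = C₀ := by linarith
    set w := Qᵀ.mulVec b with hw
    have hbw : b = Q.mulVec w := by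
      rw [hw, Matrix.mulVec_mulVec, hQQt, Matrix.one_mulVec]
    rw [hbw, hGquad, hGreg, hGquad, hGreg]
    set T := ∑ i, d i * (w i) ^ 2 with hT_def
    have hT0 : 0 ≤ T := Finset.sum_nonneg fun i _ => mul_nonneg (hd i) (sq_nonneg _)
    set W := ∑ i, d i * α' i * w i with hW_def
    have hCS : W ^ 2 ≤ S * T := by
      have h := Finset.sum_mul_sq_le_sq_mul_sq Finset.univ
        (fun i => Real.sqrt (d i) * α' i) (fun i => Real.sqrt (d i) * w i)
      have e1 : ∀ i ∈ Finset.univ, (Real.sqrt (d i) * α' i) * (Real.sqrt (d i) * w i)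
          = d i * α' i * w i := fun i _ => by
        rw [mul_mul_mul_comm, Real.mul_self_sqrt (hd i)]
        ring
      have e2 : ∀ i ∈ Finset.univ, (Real.sqrt (d i) * α' i) ^ 2 = d i * (α' i) ^ 2 :=
        fun i _ => by rw [mul_pow, Real.sq_sqrt (hd i)]
      have e3 : ∀ i ∈ Finset.univ, (Real.sqrt (d i) * w i) ^ 2 = d i * (w i) ^ 2 :=
        fun i _ => by rw [mul_pow, Real.sq_sqrt (hd i)]
      rw [Finset.sum_congr rfl e1, Finset.sum_congr rfl e2, Finset.sum_congr rfl e3] at h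
      exact h
    have hconv := norm_pow_tangent hm hSpos hT0 hCS
    have hquad : ∑ i, (y' i - d i * w i) ^ 2
        = (∑ i, (y' i - d i * α' i) ^ 2) + (∑ i, (d i) ^ 2 * (α' i - w i) ^ 2)
          + L * (S - W) := by
      have e : ∀ i ∈ Finset.univ, (y' i - d i * w i) ^ 2
          = ((y' i - d i * α' i) ^ 2 + (d i) ^ 2 * (α' i - w i) ^ 2)
            + L * (d i * (α' i) ^ 2 - d i * α' i * w i) := by
        intro i _
        linear_combination (-2 * d i * (α' i - w i)) * hkey i
      rw [Finset.sum_congr rfl e, Finset.sum_add_distrib, Finset.sum_add_distrib,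
        ← Finset.mul_sum, Finset.sum_sub_distrib, hS_def, hW_def]
    have hsq : 0 ≤ ∑ i, (d i) ^ 2 * (α' i - w i) ^ 2 :=
      Finset.sum_nonneg fun i _ => mul_nonneg (sq_nonneg _) (sq_nonneg _)
    rw [hquad]
    have h3 := mul_le_mul_of_nonneg_left hconv
      (show (0:ℝ) ≤ ↑n * lam by positivity)
    rw [hFC] at h3
    have h4 : (↑n : ℝ) * lam * (S ^ (m / 2) + m * C₀ * (W - S))
        = ↑n * lam * S ^ (m / 2) + L * (W - S) := by
      rw [hL_def]; ring
    linarith [h3, h4, hsq]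
end

section
/- Let m > 1 and assume ∑_{i=1}^n d_i·(y'_i)² > 0. Then the function F(C) = (∑_{i=1}^n 4·d_i·(y'_i)²/(2·d_i + λ·m·n·C)²)^{m/2 − 1} − C has exactly one root C_0 in (0, ∞); moreover F is positive near 0 and F(C) → −∞ as C → ∞. -/
open Matrix Filter
open scoped BigOperators Topology

/-- Auxiliary: `A * C^s - C → -∞` as `C → ∞` when `s < 1`. -/
lemma aux_rpow_sub_tendsto_atBot {A s : ℝ} (hs : s < 1) :
    Tendsto (fun C : ℝ => A * C ^ s - C) atTop atBot := by
  have h1 : Tendsto (fun C : ℝ => A * C ^ (s - 1) - 1) atTop (𝓝 (A * 0 - 1)) :=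
    ((tendsto_rpow_neg_atTop (by linarith : (0:ℝ) < -(s-1))).congr
      (fun C => by rw [neg_neg])).const_mul A |>.sub_const 1
  rw [show A * (0:ℝ) - 1 = -1 by ring] at h1
  have h2 : Tendsto (fun C : ℝ => C * (A * C ^ (s - 1) - 1)) atTop atBot :=
    Filter.Tendsto.atTop_mul_neg (by norm_num) tendsto_id h1
  refine h2.congr' ?_
  filter_upwards [eventually_gt_atTop (0:ℝ)] with C hC
  have hCs : C ^ s = C ^ (s - 1) * C := by
    have h := Real.rpow_add hC (s - 1) 1
    rw [Real.rpow_one] at h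
    rw [sub_add_cancel] at h
    rw [h]
  rw [hCs]; ring

set_option maxHeartbeats 1600000 in
/-- The function `F(C) = (∑ i, 4 d i (y' i)²/(2 d i + λ m n C)²)^{m/2 − 1} − C` has exactly
one root in `(0, ∞)`; moreover `F` is positive near `0` (from the right) and
`F(C) → −∞` as `C → ∞`. -/
theorem mPower_RLSR_F_unique_root
    (n : ℕ) (hn : 0 < n)
    (K Q : Matrix (Fin n) (Fin n) ℝ) (d : Fin n → ℝ) (Y : Fin n → ℝ)
    (lam m : ℝ) (hlam : 0 < lam) (hm : 1 < m)
    (hQ : Qᵀ * Q = 1) (hK : K = Q * Matrix.diagonal d * Qᵀ) (hd : ∀ i, 0 ≤ d i)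
    (y' : Fin n → ℝ) (hy' : y' = Qᵀ.mulVec Y)
    (hpos : 0 < ∑ i, d i * (y' i) ^ 2)
    (F : ℝ → ℝ)
    (hF : ∀ C, F C = (∑ i, 4 * d i * (y' i) ^ 2 / (2 * d i + lam * m * n * C) ^ 2) ^ (m / 2 - 1) - C) :
    (∃! C₀ : ℝ, C₀ ∈ Set.Ioi (0 : ℝ) ∧ F C₀ = 0) ∧
    (∀ᶠ C in 𝓝[>] (0 : ℝ), 0 < F C) ∧
    Tendsto F atTop atBot := by
  clear hQ hK hy'
  have hc : 0 < lam * m * (n : ℝ) := by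
    have h1 : (0:ℝ) < n := by exact_mod_cast hn
    have h2 : 0 < m := by linarith
    positivity
  set e : ℝ := m / 2 - 1 with hedef
  set S : ℝ → ℝ := fun C => ∑ i, 4 * d i * (y' i) ^ 2 / (2 * d i + lam * m * n * C) ^ 2
    with hSdef
  have hFS : ∀ C, F C = S C ^ e - C := fun C => hF C
  -- basic facts about S
  obtain ⟨i₀, hi₀⟩ : ∃ i, 0 < d i * y' i ^ 2 := by
    by_contra h
    push_neg at h
    have : ∑ i, d i * y' i ^ 2 ≤ 0 := Finset.sum_nonpos fun i _ => h i
    linarith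
  have hdi₀ : 0 < d i₀ := by
    rcases (hd i₀).lt_or_eq with h | h
    · exact h
    · exfalso; rw [← h] at hi₀; simp at hi₀
  have hSnonneg : ∀ C : ℝ, 0 ≤ S C := fun C =>
    Finset.sum_nonneg fun i _ => div_nonneg (by have := hd i; positivity) (sq_nonneg _)
  have hSpos : ∀ C : ℝ, 0 ≤ C → 0 < S C := by
    intro C hC
    refine Finset.sum_pos' (fun i _ => div_nonneg (by have := hd i; positivity) (sq_nonneg _))
      ⟨i₀, Finset.mem_univ _, ?_⟩
    have hden : 0 < 2 * d i₀ + lam * m * n * C := by nlinarith [mul_nonneg hc.le hC]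
    have hnum : 0 < 4 * d i₀ * y' i₀ ^ 2 := by nlinarith
    exact div_pos hnum (by positivity)
  have hSanti : ∀ C₁ C₂ : ℝ, 0 < C₁ → C₁ ≤ C₂ → S C₂ ≤ S C₁ := by
    intro C₁ C₂ h1 h12
    refine Finset.sum_le_sum fun i _ => ?_
    have hb := hd i
    have hd1 : 0 < 2 * d i + lam * m * n * C₁ := by nlinarith [mul_pos hc h1]
    have hd2 : 0 < 2 * d i + lam * m * n * C₂ := by nlinarith [mul_pos hc (h1.trans_le h12)]
    rw [div_le_div_iff₀ (by positivity) (by positivity)]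
    have hle : 2 * d i + lam * m * n * C₁ ≤ 2 * d i + lam * m * n * C₂ := by
      nlinarith [mul_le_mul_of_nonneg_left h12 hc.le]
    have hsq := pow_le_pow_left₀ hd1.le hle 2
    have hnum : 0 ≤ 4 * d i * y' i ^ 2 :=
      mul_nonneg (mul_nonneg (by norm_num) hb) (sq_nonneg _)
    exact mul_le_mul_of_nonneg_left hsq hnum
  have hSsq : ∀ C₁ C₂ : ℝ, 0 < C₁ → C₁ ≤ C₂ → C₁ ^ 2 * S C₁ ≤ C₂ ^ 2 * S C₂ := by
    intro C₁ C₂ h1 h12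
    have h2 : 0 < C₂ := h1.trans_le h12
    simp only [hSdef, Finset.mul_sum]
    refine Finset.sum_le_sum fun i _ => ?_
    have hb := hd i
    have hd1 : 0 < 2 * d i + lam * m * n * C₁ := by nlinarith [mul_pos hc h1]
    have hd2 : 0 < 2 * d i + lam * m * n * C₂ := by nlinarith [mul_pos hc h2]
    rw [mul_div_assoc', mul_div_assoc', div_le_div_iff₀ (by positivity) (by positivity)]
    have key : C₁ * (2 * d i + lam * m * n * C₂) ≤ C₂ * (2 * d i + lam * m * n * C₁) := by
      nlinarith [mul_le_mul_of_nonneg_left h12 hb]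
    have hsq := mul_self_le_mul_self (by positivity) key
    have hnum : 0 ≤ 4 * d i * y' i ^ 2 :=
      mul_nonneg (mul_nonneg (by norm_num) hb) (sq_nonneg _)
    nlinarith [mul_le_mul_of_nonneg_left hsq hnum]
  have hScont : ContinuousOn S (Set.Ici (0:ℝ)) := by
    rw [hSdef]
    refine continuousOn_finset_sum _ fun i _ => ?_
    rcases (hd i).lt_or_eq with h0 | h0
    · refine ContinuousOn.div continuousOn_const ?_ ?_
      · exact ((continuous_const.add (continuous_const.mul continuous_id)).pow 2).continuousOn
      · intro C hC
        have : 0 < 2 * d i + lam * m * n * C := by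
          have : 0 ≤ lam * m * n * C := mul_nonneg hc.le hC
          nlinarith
        positivity
    · have hz : d i = 0 := h0.symm
      simp only [hz, mul_zero, zero_mul, zero_div]
      exact continuousOn_const
  -- Part 2: positive near 0
  have hS0 : 0 < S 0 := hSpos 0 le_rfl
  have htend0 : Tendsto F (𝓝[>] (0:ℝ)) (𝓝 (S 0 ^ e)) := by
    have h1 : Tendsto S (𝓝[>] (0:ℝ)) (𝓝 (S 0)) :=
      (hScont 0 Set.self_mem_Ici).mono_left (nhdsWithin_mono 0 Set.Ioi_subset_Ici_self)
    have h2 : Tendsto (fun C => S C ^ e) (𝓝[>] (0:ℝ)) (𝓝 (S 0 ^ e)) :=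
      h1.rpow_const (Or.inl hS0.ne')
    have h3 : Tendsto (fun C : ℝ => C) (𝓝[>] (0:ℝ)) (𝓝 0) :=
      tendsto_id.mono_left nhdsWithin_le_nhds
    have h4 := h2.sub h3
    rw [sub_zero] at h4
    exact h4.congr fun C => (hFS C).symm
  have part2 : ∀ᶠ C in 𝓝[>] (0:ℝ), 0 < F C :=
    htend0.eventually (eventually_gt_nhds (Real.rpow_pos_of_pos hS0 e))
  -- Part 3: tendsto atBot
  have part3 : Tendsto F atTop atBot := by
    rcases le_or_gt 0 e with he | he
    · have hb1 : ∀ᶠ C in atTop, F C ≤ S 1 ^ e - C := by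
        filter_upwards [eventually_ge_atTop (1:ℝ)] with C hC
        rw [hFS]
        have := Real.rpow_le_rpow (hSnonneg C) (hSanti 1 C one_pos hC) he
        linarith
      refine tendsto_atBot_mono' atTop hb1 ?_
      have h := tendsto_atBot_add_const_left atTop (S 1 ^ e) (tendsto_neg_atTop_atBot (G := ℝ))
      exact h.congr fun C => by ring
    · set s : ℝ := -(2*e) with hsdef
      have hs1 : s < 1 := by rw [hsdef, hedef]; linarith
      have hb1 : ∀ᶠ C in atTop, F C ≤ S 1 ^ e * C ^ s - C := by
        filter_upwards [eventually_ge_atTop (1:ℝ)] with C hC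
        have hCpos : 0 < C := lt_of_lt_of_le one_pos hC
        have hS1 : 0 < S 1 := hSpos 1 zero_le_one
        have h1 : S 1 / C ^ 2 ≤ S C := by
          have h := hSsq 1 C one_pos hC
          rw [one_pow, one_mul] at h
          rw [div_le_iff₀ (by positivity)]
          nlinarith
        have h2 : S C ^ e ≤ (S 1 / C ^ 2) ^ e :=
          Real.rpow_le_rpow_of_nonpos (div_pos hS1 (pow_pos hCpos 2)) h1 he.le
        have h3 : (S 1 / C ^ 2) ^ e = S 1 ^ e * C ^ s := by
          have e1 : (S 1 / C ^ 2) ^ e = S 1 ^ e / (C ^ 2) ^ e :=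
            Real.div_rpow hS1.le (sq_nonneg C) e
          have e2 : ((C ^ 2 : ℝ)) ^ e = (C ^ ((2:ℕ) : ℝ)) ^ e := by
            rw [Real.rpow_natCast]
          have e3 : (C ^ ((2:ℕ) : ℝ)) ^ e = C ^ (((2:ℕ) : ℝ) * e) :=
            (Real.rpow_mul hCpos.le _ _).symm
          have e4 : C ^ (((2:ℕ) : ℝ) * e) = C ^ (-s) := by
            rw [hsdef]; norm_num
          rw [e1, e2, e3, e4, Real.rpow_neg hCpos.le]
          field_simp
        rw [hFS]
        rw [h3] at h2
        linarith
      exact tendsto_atBot_mono' atTop hb1 (aux_rpow_sub_tendsto_atBot hs1)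
  -- existence
  obtain ⟨c₁, hc₁F, hc₁pos⟩ : ∃ C, 0 < F C ∧ C ∈ Set.Ioi (0:ℝ) :=
    (part2.and self_mem_nhdsWithin).exists
  obtain ⟨c₂, hc₂F, hc₂ge⟩ : ∃ C, F C < 0 ∧ c₁ ≤ C :=
    ((part3.eventually (eventually_lt_atBot 0)).and (eventually_ge_atTop c₁)).exists
  have hc₁pos' : (0:ℝ) < c₁ := hc₁pos
  have hcont : ContinuousOn F (Set.Icc c₁ c₂) := by
    have hsub : Set.Icc c₁ c₂ ⊆ Set.Ici 0 := fun x hx => le_trans hc₁pos'.le hx.1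
    have h1 : ContinuousOn S (Set.Icc c₁ c₂) := hScont.mono hsub
    have h2 : ContinuousOn (fun C => S C ^ e) (Set.Icc c₁ c₂) :=
      h1.rpow_const fun x hx => Or.inl (hSpos x (hsub hx)).ne'
    exact (h2.sub continuousOn_id).congr fun C _ => hFS C
  obtain ⟨C₀, hC₀mem, hC₀⟩ : ∃ C₀ ∈ Set.Icc c₁ c₂, F C₀ = 0 := by
    have h := intermediate_value_Icc' hc₂ge hcont
    have h0 : (0:ℝ) ∈ Set.Icc (F c₂) (F c₁) := ⟨hc₂F.le, hc₁F.le⟩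
    obtain ⟨C₀, h1, h2⟩ := h h0
    exact ⟨C₀, h1, h2⟩
  have hC₀pos : (0:ℝ) < C₀ := lt_of_lt_of_le hc₁pos' hC₀mem.1
  -- uniqueness
  have huniq : ∀ C₁ C₂ : ℝ, 0 < C₁ → C₁ < C₂ → F C₁ = 0 → F C₂ = 0 → False := by
    intro C₁ C₂ h1 h12 hF1 hF2
    have h2 : 0 < C₂ := h1.trans h12
    have e1 : S C₁ ^ e = C₁ := by have h := hFS C₁; rw [hF1] at h; linarith
    have e2 : S C₂ ^ e = C₂ := by have h := hFS C₂; rw [hF2] at h; linarith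
    have hS1 : 0 < S C₁ := hSpos C₁ h1.le
    have hS2 : 0 < S C₂ := hSpos C₂ h2.le
    have hanti := hSanti C₁ C₂ h1 h12.le
    rcases le_or_gt 0 e with he | he
    · have : C₂ ≤ C₁ := by
        rw [← e1, ← e2]
        exact Real.rpow_le_rpow hS2.le hanti he
      linarith
    · have hsq := hSsq C₁ C₂ h1 h12.le
      set r : ℝ := C₁ / C₂ with hrdef
      have hr0 : 0 < r := div_pos h1 h2
      have hr1 : r < 1 := (div_lt_one h2).mpr h12
      have key1 : r = (S C₂ / S C₁) ^ (-e) := by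
        rw [Real.rpow_neg (div_pos hS2 hS1).le, Real.div_rpow hS2.le hS1.le, inv_div, e1, e2]
      have key2 : r ^ (2:ℕ) ≤ S C₂ / S C₁ := by
        rw [hrdef, div_pow, div_le_div_iff₀ (by positivity) hS1]
        nlinarith
      have key3 : ((r ^ (2:ℕ) : ℝ)) ^ (-e) ≤ r := by
        calc ((r ^ (2:ℕ) : ℝ)) ^ (-e) ≤ (S C₂ / S C₁) ^ (-e) :=
              Real.rpow_le_rpow (by positivity) key2 (by linarith)
          _ = r := key1.symm
      have key4 : ((r ^ (2:ℕ) : ℝ)) ^ (-e) = r ^ (-(2*e)) := by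
        rw [← Real.rpow_natCast r 2, ← Real.rpow_mul hr0.le]
        norm_num
      have key5 : r ^ (1:ℝ) < r ^ (-(2*e)) := by
        refine Real.rpow_lt_rpow_of_exponent_gt hr0 hr1 ?_
        rw [hedef] at he ⊢; linarith
      rw [Real.rpow_one] at key5
      rw [key4] at key3
      linarith
  refine ⟨⟨C₀, ⟨hC₀pos, hC₀⟩, ?_⟩, part2, part3⟩
  rintro y ⟨hy, hyF⟩
  rcases lt_trichotomy y C₀ with hlt | heq | hgt
  · exact absurd (huniq y C₀ hy hlt hyF hC₀) not_false
  · exact heq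
  · exact absurd (huniq C₀ y hC₀pos hgt hC₀ hyF) not_false
end

section
/- If C_0 > 0 satisfies F(C_0) = 0, then the vector α' ∈ ℝⁿ defined by α'_i = 2·y'_i/(2·d_i + λ·m·n·C_0) satisfies, for every 1 ≤ i ≤ n, the componentwise stationarity system y'_i = d_i·α'_i + λ·(m·n/2)·(∑_{j=1}^n d_j·(α'_j)²)^{m/2 − 1}·α'_i, and moreover C_0 = (∑_{j=1}^n d_j·(α'_j)²)^{m/2 − 1}. -/
open scoped BigOperators

/-- If `C₀ > 0` is a root of `F`, then `α'` defined by
`α' i = 2 y' i / (2 d i + λ m n C₀)` satisfies the componentwise stationarity system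
`y' i = d i α' i + λ (m n / 2) (∑ j, d j (α' j)²)^{m/2 − 1} α' i` for every `i`,
and moreover `C₀ = (∑ j, d j (α' j)²)^{m/2 − 1}`. -/
theorem mPower_RLSR_root_gives_stationarity
    (n : ℕ) (hn : 0 < n)
    (lam m : ℝ) (hlam : 0 < lam) (hm : 1 < m)
    (d : Fin n → ℝ) (hd : ∀ i, 0 ≤ d i)
    (y' : Fin n → ℝ) (hpos : 0 < ∑ i, d i * (y' i) ^ 2)
    (C₀ : ℝ) (hC₀ : 0 < C₀)
    (hroot : (∑ i, 4 * d i * (y' i) ^ 2 / (2 * d i + lam * m * n * C₀) ^ 2) ^ (m / 2 - 1) - C₀ = 0)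
    (α' : Fin n → ℝ) (hα' : ∀ i, α' i = 2 * y' i / (2 * d i + lam * m * n * C₀)) :
    (∀ i, y' i = d i * α' i +
        lam * (m * n / 2) * (∑ j, d j * (α' j) ^ 2) ^ (m / 2 - 1) * α' i) ∧
    C₀ = (∑ j, d j * (α' j) ^ 2) ^ (m / 2 - 1) := by
  have hnpos : (0:ℝ) < (n:ℝ) := by exact_mod_cast hn
  have hden : ∀ i, 0 < 2 * d i + lam * m * n * C₀ := by
    intro i
    have : 0 < lam * m * n * C₀ := by positivity
    nlinarith [hd i]
  have hsum : (∑ j, d j * (α' j) ^ 2)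
      = ∑ i, 4 * d i * (y' i) ^ 2 / (2 * d i + lam * m * n * C₀) ^ 2 := by
    apply Finset.sum_congr rfl
    intro j _
    have h := (hden j).ne'
    rw [hα' j]
    field_simp
    ring
  have hC : C₀ = (∑ j, d j * (α' j) ^ 2) ^ (m / 2 - 1) := by
    rw [hsum]; linarith [hroot]
  refine ⟨fun i => ?_, hC⟩
  rw [← hC]
  have h := (hden i).ne'
  have hαi : α' i * (2 * d i + lam * m * n * C₀) = 2 * y' i := by
    rw [hα' i]; field_simp
  nlinarith [hαi]
end

section
/- (Z-equivalence lemma) Let m > 1 and λ > 0, and let f_0 be the unique minimizer over H of the m-power regularized least squares objective J(f) = (1/n)·∑_{i=1}^n (y_i − ⟨φ_i, f⟩)² + λ·‖f‖^m. If f_0 ≠ 0, set λ_2 = (m/2)·λ·‖f_0‖^{m−2}. Then f_0 is also the unique minimizer over H of the kernel ridge regression objective f ↦ (1/n)·∑_{i=1}^n (y_i − ⟨φ_i, f⟩)² + λ_2·‖f‖². -/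
open scoped RealInnerProductSpace BigOperators

/-- Z-equivalence lemma: for `m > 1`, `λ > 0`, if `f₀` is the unique minimizer of the
m-power regularized least squares objective and `f₀ ≠ 0`, then with
`λ₂ = (m/2)·λ·‖f₀‖^{m−2}`, `f₀` is also the unique minimizer of the kernel ridge
regression objective `f ↦ (1/n)·∑ (y i − ⟪φ i, f⟫)² + λ₂·‖f‖²`. -/
theorem mPower_RLSR_Z_equivalence
    {H : Type*} [NormedAddCommGroup H] [InnerProductSpace ℝ H] [CompleteSpace H]
    (n : ℕ) (hn : 0 < n) (φ : Fin n → H) (y : Fin n → ℝ)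
    (lam m : ℝ) (hlam : 0 < lam) (hm : 1 < m)
    (f₀ : H) (hne : f₀ ≠ 0)
    (hmin : ∀ g : H,
      (1 / (n : ℝ)) * ∑ i, (y i - ⟪φ i, f₀⟫) ^ 2 + lam * ‖f₀‖ ^ m ≤
      (1 / (n : ℝ)) * ∑ i, (y i - ⟪φ i, g⟫) ^ 2 + lam * ‖g‖ ^ m)
    (lam₂ : ℝ) (hlam₂ : lam₂ = (m / 2) * lam * ‖f₀‖ ^ (m - 2)) :
    ∀ g : H, g ≠ f₀ →
      (1 / (n : ℝ)) * ∑ i, (y i - ⟪φ i, f₀⟫) ^ 2 + lam₂ * ‖f₀‖ ^ 2 <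
      (1 / (n : ℝ)) * ∑ i, (y i - ⟪φ i, g⟫) ^ 2 + lam₂ * ‖g‖ ^ 2 := by
  intro g hg
  set v : H := g - f₀ with hv
  have hgv : g = f₀ + v := by rw [hv]; abel
  have hvne : v ≠ 0 := fun h => hg (by rwa [hv, sub_eq_zero] at h)
  have hf0 : (0:ℝ) < ‖f₀‖ := norm_pos_iff.mpr hne
  have hlam₂pos : 0 < lam₂ := by
    rw [hlam₂]
    exact mul_pos (mul_pos (by linarith) hlam) (Real.rpow_pos_of_pos hf0 _)
  -- rpow conversion
  have hpow : ∀ e : ℝ, (‖f₀‖ ^ 2) ^ e = ‖f₀‖ ^ (2 * e) := by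
    intro e
    rw [← Real.rpow_natCast ‖f₀‖ 2, ← Real.rpow_mul (norm_nonneg _)]
    norm_num
  set q : ℝ → ℝ := fun t => ‖f₀‖ ^ 2 + 2 * t * ⟪f₀, v⟫ + t ^ 2 * ‖v‖ ^ 2 with hq
  have hnormsq : ∀ t : ℝ, ‖f₀ + t • v‖ ^ 2 = q t := by
    intro t
    rw [hq]
    rw [norm_add_sq_real, real_inner_smul_right, norm_smul]
    simp [mul_pow, sq_abs]
    ring
  have hnormm : ∀ t : ℝ, ‖f₀ + t • v‖ ^ m = q t ^ (m / 2) := by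
    intro t
    rw [← hnormsq t, ← Real.rpow_natCast (‖f₀ + t • v‖) 2,
      ← Real.rpow_mul (norm_nonneg _)]
    congr 1
    push_cast
    ring
  set F : ℝ → ℝ := fun t =>
    (1 / (n:ℝ)) * ∑ i, (y i - (⟪φ i, f₀⟫ + t * ⟪φ i, v⟫)) ^ 2 + lam * q t ^ (m / 2)
    with hF
  have hFJ : ∀ t : ℝ, F t = (1 / (n:ℝ)) * ∑ i, (y i - ⟪φ i, f₀ + t • v⟫) ^ 2
      + lam * ‖f₀ + t • v‖ ^ m := by
    intro t
    simp only [hF, hnormm t]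
    congr 2
    apply Finset.sum_congr rfl
    intro i _
    rw [inner_add_right, real_inner_smul_right]
  have hmin' : IsLocalMin F 0 := by
    have h0 : ∀ t : ℝ, F 0 ≤ F t := by
      intro t
      rw [hFJ, hFJ]
      simp only [zero_smul, add_zero]
      exact hmin (f₀ + t • v)
    exact Filter.Eventually.of_forall h0
  -- derivative of q
  have hq' : HasDerivAt q (2 * ⟪f₀, v⟫) 0 := by
    have h1 : HasDerivAt (fun t : ℝ => 2 * t * ⟪f₀, v⟫) (2 * ⟪f₀, v⟫) 0 := by
      simpa using ((hasDerivAt_id (0:ℝ)).const_mul 2).mul_const ⟪f₀, v⟫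
    have h2 : HasDerivAt (fun t : ℝ => t ^ 2 * ‖v‖ ^ 2) 0 0 := by
      simpa using (hasDerivAt_pow 2 (0:ℝ)).mul_const (‖v‖ ^ 2)
    have := ((hasDerivAt_const (0:ℝ) (‖f₀‖ ^ 2)).fun_add h1).fun_add h2
    simpa [hq] using this
  have hqzero : q 0 = ‖f₀‖ ^ 2 := by simp [hq]
  have hqne : q 0 ≠ 0 := by rw [hqzero]; exact pow_ne_zero _ (ne_of_gt hf0)
  have hrpow : HasDerivAt (fun t => q t ^ (m / 2))
      (2 * ⟪f₀, v⟫ * (m / 2) * q 0 ^ (m / 2 - 1)) 0 := by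
    have := hq'.rpow_const (p := m / 2) (Or.inl hqne)
    convert this using 1 <;> ring
  -- derivative of the data term
  have hsum' : HasDerivAt (fun t : ℝ => ∑ i, (y i - (⟪φ i, f₀⟫ + t * ⟪φ i, v⟫)) ^ 2)
      (∑ i, (-2 * ⟪φ i, v⟫ * (y i - ⟪φ i, f₀⟫))) 0 := by
    apply HasDerivAt.fun_sum
    intro i _
    have hi : HasDerivAt (fun t : ℝ => y i - (⟪φ i, f₀⟫ + t * ⟪φ i, v⟫))
        (-⟪φ i, v⟫) 0 := by
      have := (((hasDerivAt_id (0:ℝ)).mul_const ⟪φ i, v⟫).const_add ⟪φ i, f₀⟫).const_sub (y i)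
      simpa using this
    have h2 := hi.fun_pow 2
    exact h2.congr_deriv (by push_cast; ring)
  have hF' : HasDerivAt F
      ((1 / (n:ℝ)) * ∑ i, (-2 * ⟪φ i, v⟫ * (y i - ⟪φ i, f₀⟫))
        + lam * (2 * ⟪f₀, v⟫ * (m / 2) * q 0 ^ (m / 2 - 1))) 0 :=
    (hsum'.const_mul _).add (hrpow.const_mul lam)
  have hD0 := hmin'.hasDerivAt_eq_zero hF'
  rw [hqzero, hpow (m / 2 - 1)] at hD0
  have h2e : 2 * (m / 2 - 1) = m - 2 := by ring
  rw [h2e] at hD0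
  have hstat : (1 / (n:ℝ)) * ∑ i, (-2 * ⟪φ i, v⟫ * (y i - ⟪φ i, f₀⟫))
      + 2 * lam₂ * ⟪f₀, v⟫ = 0 := by
    rw [hlam₂]
    linear_combination hD0
  -- final computation
  have hip : ∀ i, ⟪φ i, g⟫ = ⟪φ i, f₀⟫ + ⟪φ i, v⟫ := by
    intro i; rw [hgv, inner_add_right]
  have hng : ‖g‖ ^ 2 = ‖f₀‖ ^ 2 + 2 * ⟪f₀, v⟫ + ‖v‖ ^ 2 := by
    rw [hgv]; exact norm_add_sq_real f₀ v
  have hexp : ∑ i, (y i - ⟪φ i, g⟫) ^ 2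
      = ∑ i, (y i - ⟪φ i, f₀⟫) ^ 2 + ∑ i, (-2 * ⟪φ i, v⟫ * (y i - ⟪φ i, f₀⟫))
        + ∑ i, ⟪φ i, v⟫ ^ 2 := by
    rw [← Finset.sum_add_distrib, ← Finset.sum_add_distrib]
    exact Finset.sum_congr rfl fun i _ => by rw [hip i]; ring
  have hd2 : 0 ≤ ∑ i, ⟪φ i, v⟫ ^ 2 := Finset.sum_nonneg fun i _ => sq_nonneg _
  have hn' : 0 < (1 / (n:ℝ)) := by positivity
  have hvpos : 0 < ‖v‖ ^ 2 := pow_pos (norm_pos_iff.mpr hvne) 2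
  rw [hexp, hng]
  nlinarith [hstat, mul_nonneg hn'.le hd2, mul_pos hlam₂pos hvpos]
end

section
/- (Theorem 2, β-stability) Assume m ≥ 2, |y_j| ≤ C_y and ‖φ_j‖ ≤ κ for all 1 ≤ j ≤ n, and set C = 2·(C_y + κ·(C_y²/λ)^{1/m}) and β = C·κ·(2^{m−2}·C·κ/(λ·n))^{1/(m−1)}. Then for every φ ∈ H with ‖φ‖ ≤ κ and every y ∈ ℝ with |y| ≤ C_y, one has |(y − ⟨φ, f_Z⟩)² − (y − ⟨φ, f_{Z^i}⟩)²| ≤ β; that is, the m-power regularized least squares algorithm is β uniformly stable. -/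
open scoped RealInnerProductSpace BigOperators

lemma aux_rpow_add_le {x y p : ℝ} (hx : 0 ≤ x) (hy : 0 ≤ y) (hp : 1 ≤ p) :
    x ^ p + y ^ p ≤ (x + y) ^ p := by
  have h := NNReal.add_rpow_le_rpow_add ⟨x, hx⟩ ⟨y, hy⟩ hp
  have := (NNReal.coe_le_coe).2 h
  exact this

lemma aux_rpow_mid {x y p : ℝ} (hx : 0 ≤ x) (hy : 0 ≤ y) (hp : 1 ≤ p) :
    ((x + y) / 2) ^ p ≤ (x ^ p + y ^ p) / 2 := by
  have h := (convexOn_rpow hp).2 (Set.mem_Ici.2 hx) (Set.mem_Ici.2 hy)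
    (by norm_num : (0:ℝ) ≤ 1/2) (by norm_num : (0:ℝ) ≤ 1/2) (by norm_num)
  simp only [smul_eq_mul] at h
  calc ((x + y) / 2) ^ p = (1/2 * x + 1/2 * y) ^ p := by ring_nf
    _ ≤ 1/2 * x ^ p + 1/2 * y ^ p := h
    _ = (x ^ p + y ^ p) / 2 := by ring

lemma aux_clarkson {H : Type*} [NormedAddCommGroup H] [InnerProductSpace ℝ H]
    (f g : H) {m : ℝ} (hm : 2 ≤ m) :
    ‖(1/2 : ℝ) • (f + g)‖ ^ m + ‖(1/2 : ℝ) • (f - g)‖ ^ m ≤ (‖f‖ ^ m + ‖g‖ ^ m) / 2 := by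
  set u := ‖(1/2 : ℝ) • (f + g)‖ with hu
  set v := ‖(1/2 : ℝ) • (f - g)‖ with hv
  have hpar : u ^ 2 + v ^ 2 = (‖f‖ ^ 2 + ‖g‖ ^ 2) / 2 := by
    have := parallelogram_law_with_norm ℝ f g
    have hu2 : u = (1/2) * ‖f + g‖ := by rw [hu, norm_smul]; simp [abs_of_nonneg]
    have hv2 : v = (1/2) * ‖f - g‖ := by rw [hv, norm_smul]; simp [abs_of_nonneg]
    rw [hu2, hv2]; nlinarith [this]
  have hs : (1:ℝ) ≤ m / 2 := by linarith
  have hms : 2 * (m / 2) = m := by ring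
  have key : ∀ w : ℝ, 0 ≤ w → w ^ m = (w ^ (2:ℕ)) ^ (m / 2) := by
    intro w hw
    rw [← Real.rpow_natCast w 2, ← Real.rpow_mul hw]
    push_cast
    rw [hms]
  rw [key u (norm_nonneg _), key v (norm_nonneg _), key ‖f‖ (norm_nonneg _),
    key ‖g‖ (norm_nonneg _)]
  have h1 : (u ^ (2:ℕ)) ^ (m/2) + (v ^ (2:ℕ)) ^ (m/2) ≤ (u ^ (2:ℕ) + v ^ (2:ℕ)) ^ (m/2) :=
    aux_rpow_add_le (by positivity) (by positivity) hs
  have h2 : (u ^ (2:ℕ) + v ^ (2:ℕ)) ^ (m/2) = ((‖f‖ ^ (2:ℕ) + ‖g‖ ^ (2:ℕ)) / 2) ^ (m/2) := by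
    rw [show (u ^ (2:ℕ) + v ^ (2:ℕ)) = u ^ 2 + v ^ 2 by norm_num, hpar]
  have h3 : ((‖f‖ ^ (2:ℕ) + ‖g‖ ^ (2:ℕ)) / 2) ^ (m/2)
      ≤ ((‖f‖ ^ (2:ℕ)) ^ (m/2) + (‖g‖ ^ (2:ℕ)) ^ (m/2)) / 2 :=
    aux_rpow_mid (by positivity) (by positivity) hs
  linarith

set_option maxHeartbeats 1000000 in
/-- Theorem 2 (β-stability): with `m ≥ 2`, `|y j| ≤ C_y`, `‖φ j‖ ≤ κ`,
`C = 2·(C_y + κ·(C_y²/λ)^{1/m})` and `β = C·κ·(2^{m−2}·C·κ/(λ·n))^{1/(m−1)}`,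
for every `φ₀` with `‖φ₀‖ ≤ κ` and every `y₀` with `|y₀| ≤ C_y`, one has
`|(y₀ − ⟪φ₀, fZ⟫)² − (y₀ − ⟪φ₀, fZi⟫)²| ≤ β`: the m-power regularized least squares
algorithm is `β` uniformly stable. -/
theorem mPower_RLSR_beta_stable
    {H : Type*} [NormedAddCommGroup H] [InnerProductSpace ℝ H] [CompleteSpace H]
    (n : ℕ) (hn : 0 < n) (φ : Fin n → H) (y : Fin n → ℝ)
    (lam m Cy κ : ℝ) (hlam : 0 < lam) (hm : 2 ≤ m) (hCy : 0 < Cy) (hκ : 0 < κ)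
    (hy : ∀ j, |y j| ≤ Cy) (hφ : ∀ j, ‖φ j‖ ≤ κ)
    (i : Fin n) (fZ fZi : H)
    (hfZ : ∀ g : H,
      (1 / (n : ℝ)) * ∑ j, (y j - ⟪φ j, fZ⟫) ^ 2 + lam * ‖fZ‖ ^ m ≤
      (1 / (n : ℝ)) * ∑ j, (y j - ⟪φ j, g⟫) ^ 2 + lam * ‖g‖ ^ m)
    (hfZi : ∀ g : H,
      (1 / (n : ℝ)) * ∑ j ∈ Finset.univ.erase i, (y j - ⟪φ j, fZi⟫) ^ 2 + lam * ‖fZi‖ ^ m ≤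
      (1 / (n : ℝ)) * ∑ j ∈ Finset.univ.erase i, (y j - ⟪φ j, g⟫) ^ 2 + lam * ‖g‖ ^ m)
    (C β : ℝ) (hC : C = 2 * (Cy + κ * (Cy ^ 2 / lam) ^ (1 / m)))
    (hβ : β = C * κ * ((2 : ℝ) ^ (m - 2) * C * κ / (lam * n)) ^ (1 / (m - 1))) :
    ∀ (φ₀ : H) (y₀ : ℝ), ‖φ₀‖ ≤ κ → |y₀| ≤ Cy →
      |(y₀ - ⟪φ₀, fZ⟫) ^ 2 - (y₀ - ⟪φ₀, fZi⟫) ^ 2| ≤ β := by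
  have hn' : (0:ℝ) < n := by exact_mod_cast hn
  have hN : (0:ℝ) < 1 / n := by positivity
  have hm0 : m ≠ 0 := by linarith
  have hm1 : (0:ℝ) < m := by linarith
  set R : ℝ := (Cy ^ 2 / lam) ^ (1 / m) with hR
  have hRpos : 0 < R := by
    rw [hR]; apply Real.rpow_pos_of_pos; positivity
  -- generic norm bound from objective ≤ Cy^2
  have norm_bd : ∀ f : H, lam * ‖f‖ ^ m ≤ Cy ^ 2 → ‖f‖ ≤ R := by
    intro f hf
    have h1 : ‖f‖ ^ m ≤ Cy ^ 2 / lam := (le_div_iff₀' hlam).2 hf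
    have h2 : (‖f‖ ^ m) ^ (1 / m) ≤ (Cy ^ 2 / lam) ^ (1 / m) :=
      Real.rpow_le_rpow (Real.rpow_nonneg (norm_nonneg f) m) h1 (by positivity)
    have h3 : (‖f‖ ^ m) ^ (1 / m) = ‖f‖ := by
      rw [← Real.rpow_mul (norm_nonneg f), mul_one_div_cancel hm0, Real.rpow_one]
    rw [h3] at h2; exact h2
  -- sum of squared outputs bound
  have hysq : ∀ j, (y j) ^ 2 ≤ Cy ^ 2 := by
    intro j
    have := abs_le.1 (hy j)
    nlinarith
  have hsum_univ : ∑ j, (y j) ^ 2 ≤ n * Cy ^ 2 := by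
    calc ∑ j, (y j) ^ 2 ≤ ∑ _j : Fin n, Cy ^ 2 := Finset.sum_le_sum fun j _ => hysq j
      _ = n * Cy ^ 2 := by simp [Finset.sum_const, Finset.card_univ, nsmul_eq_mul]
  have hsum_erase : ∑ j ∈ Finset.univ.erase i, (y j) ^ 2 ≤ n * Cy ^ 2 := by
    refine le_trans (Finset.sum_le_sum_of_subset_of_nonneg (Finset.erase_subset _ _)
      (fun j _ _ => sq_nonneg _)) hsum_univ
  -- norm bounds on fZ, fZi
  have hfZ_bd : ‖fZ‖ ≤ R := by
    apply norm_bd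
    have h0 := hfZ 0
    simp only [inner_zero_right, sub_zero, norm_zero, Real.zero_rpow hm0, mul_zero,
      add_zero] at h0
    have hnn : 0 ≤ (1 / (n:ℝ)) * ∑ j, (y j - ⟪φ j, fZ⟫) ^ 2 := by positivity
    have : (1 / (n:ℝ)) * ∑ j, (y j) ^ 2 ≤ Cy ^ 2 := by
      rw [div_mul_eq_mul_div, one_mul, div_le_iff₀ hn']
      linarith [hsum_univ]
    linarith
  have hfZi_bd : ‖fZi‖ ≤ R := by
    apply norm_bd
    have h0 := hfZi 0
    simp only [inner_zero_right, sub_zero, norm_zero, Real.zero_rpow hm0, mul_zero,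
      add_zero] at h0
    have hnn : 0 ≤ (1 / (n:ℝ)) * ∑ j ∈ Finset.univ.erase i, (y j - ⟪φ j, fZi⟫) ^ 2 := by
      positivity
    have : (1 / (n:ℝ)) * ∑ j ∈ Finset.univ.erase i, (y j) ^ 2 ≤ Cy ^ 2 := by
      rw [div_mul_eq_mul_div, one_mul, div_le_iff₀ hn']
      linarith [hsum_erase]
    linarith
  have hCpos : 0 < C := by rw [hC]; positivity
  -- midpoint and half-difference
  set g : H := (1/2 : ℝ) • (fZ + fZi) with hg
  set d : H := (1/2 : ℝ) • (fZ - fZi) with hd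
  set D : ℝ := ‖d‖ with hD
  have hDnn : 0 ≤ D := norm_nonneg d
  have hg_inner : ∀ j : Fin n, ⟪φ j, g⟫ = (⟪φ j, fZ⟫ + ⟪φ j, fZi⟫) / 2 := by
    intro j
    rw [hg, real_inner_smul_right, inner_add_right]; ring
  have hg_norm : ‖g‖ ≤ R := by
    have h1 : ‖g‖ ≤ (1/2) * (‖fZ‖ + ‖fZi‖) := by
      rw [hg, norm_smul]
      have h12 : ‖(1/2 : ℝ)‖ = 1/2 := by norm_num
      rw [h12]
      have := norm_add_le fZ fZi
      linarith
    linarith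
  -- Clarkson
  have clark : ‖g‖ ^ m + D ^ m ≤ (‖fZ‖ ^ m + ‖fZi‖ ^ m) / 2 := aux_clarkson fZ fZi hm
  -- split sums at i
  have e1 : ∑ j, (y j - ⟪φ j, fZ⟫) ^ 2
      = (y i - ⟪φ i, fZ⟫) ^ 2 + ∑ j ∈ Finset.univ.erase i, (y j - ⟪φ j, fZ⟫) ^ 2 :=
    (Finset.add_sum_erase _ _ (Finset.mem_univ i)).symm
  have e2 : ∑ j, (y j - ⟪φ j, g⟫) ^ 2
      = (y i - ⟪φ i, g⟫) ^ 2 + ∑ j ∈ Finset.univ.erase i, (y j - ⟪φ j, g⟫) ^ 2 :=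
    (Finset.add_sum_erase _ _ (Finset.mem_univ i)).symm
  have key1 := hfZ g
  have key2 := hfZi g
  rw [e1, e2] at key1
  -- per-term convexity on the erased sum
  have hSc : 2 * ∑ j ∈ Finset.univ.erase i, (y j - ⟪φ j, g⟫) ^ 2
      ≤ ∑ j ∈ Finset.univ.erase i, (y j - ⟪φ j, fZ⟫) ^ 2
        + ∑ j ∈ Finset.univ.erase i, (y j - ⟪φ j, fZi⟫) ^ 2 := by
    rw [Finset.mul_sum, ← Finset.sum_add_distrib]
    refine Finset.sum_le_sum fun j _ => ?_
    rw [hg_inner j]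
    nlinarith [sq_nonneg (⟪φ j, fZ⟫ - ⟪φ j, fZi⟫)]
  have p1 := mul_le_mul_of_nonneg_left hSc hN.le
  have p2 : 2 * lam * (‖g‖ ^ m + D ^ m) ≤ 2 * lam * ((‖fZ‖ ^ m + ‖fZi‖ ^ m) / 2) :=
    mul_le_mul_of_nonneg_left clark (by positivity)
  have hmain : 2 * lam * D ^ m
      ≤ (1 / (n:ℝ)) * ((y i - ⟪φ i, g⟫) ^ 2 - (y i - ⟪φ i, fZ⟫) ^ 2) := by
    linarith [key1, key2, p1, p2]
  -- bound the loss difference at i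
  have hfg : fZ - g = d := by
    rw [hg, hd]
    module
  have hdiff_i : ⟪φ i, fZ⟫ - ⟪φ i, g⟫ = ⟪φ i, d⟫ := by
    rw [← inner_sub_right, hfg]
  have habs_inner : ∀ (ψ : H) (f : H), ‖ψ‖ ≤ κ → |⟪ψ, f⟫| ≤ κ * ‖f‖ := by
    intro ψ f hψ
    exact (abs_real_inner_le_norm ψ f).trans
      (mul_le_mul_of_nonneg_right hψ (norm_nonneg f))
  have hbound2 : ∀ (ψ : H) (y₀ : ℝ) (f₁ f₂ : H), ‖ψ‖ ≤ κ → |y₀| ≤ Cy →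
      ‖f₁‖ ≤ R → ‖f₂‖ ≤ R → |2 * y₀ - ⟪ψ, f₁⟫ - ⟪ψ, f₂⟫| ≤ C := by
    intro ψ y₀ f₁ f₂ hψ hy₀ h1 h2
    have hA : |⟪ψ, f₁⟫| ≤ κ * R :=
      (habs_inner ψ f₁ hψ).trans (mul_le_mul_of_nonneg_left h1 hκ.le)
    have hB : |⟪ψ, f₂⟫| ≤ κ * R :=
      (habs_inner ψ f₂ hψ).trans (mul_le_mul_of_nonneg_left h2 hκ.le)
    have h3 := abs_le.1 hy₀
    have h4 := abs_le.1 hA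
    have h5 := abs_le.1 hB
    rw [abs_le, hC, hR]
    constructor <;> [nlinarith; nlinarith]
  have hloss_i : (y i - ⟪φ i, g⟫) ^ 2 - (y i - ⟪φ i, fZ⟫) ^ 2 ≤ C * κ * D := by
    have heq : (y i - ⟪φ i, g⟫) ^ 2 - (y i - ⟪φ i, fZ⟫) ^ 2
        = (⟪φ i, fZ⟫ - ⟪φ i, g⟫) * (2 * y i - ⟪φ i, g⟫ - ⟪φ i, fZ⟫) := by ring
    have hb1 : |⟪φ i, fZ⟫ - ⟪φ i, g⟫| ≤ κ * D := by
      rw [hdiff_i]; exact habs_inner (φ i) d (hφ i)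
    have hb2 : |2 * y i - ⟪φ i, g⟫ - ⟪φ i, fZ⟫| ≤ C :=
      hbound2 (φ i) (y i) g fZ (hφ i) (hy i) hg_norm hfZ_bd
    calc (y i - ⟪φ i, g⟫) ^ 2 - (y i - ⟪φ i, fZ⟫) ^ 2
        ≤ |(⟪φ i, fZ⟫ - ⟪φ i, g⟫) * (2 * y i - ⟪φ i, g⟫ - ⟪φ i, fZ⟫)| := by
          rw [← heq]; exact le_abs_self _
      _ = |⟪φ i, fZ⟫ - ⟪φ i, g⟫| * |2 * y i - ⟪φ i, g⟫ - ⟪φ i, fZ⟫| := abs_mul _ _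
      _ ≤ (κ * D) * C := mul_le_mul hb1 hb2 (abs_nonneg _) (by positivity)
      _ = C * κ * D := by ring
  have hstar : 2 * lam * D ^ m ≤ (1 / (n:ℝ)) * (C * κ * D) :=
    hmain.trans (mul_le_mul_of_nonneg_left hloss_i hN.le)
  -- derive the bound on ‖fZ - fZi‖
  set K : ℝ := (2 : ℝ) ^ (m - 2) * C * κ / (lam * n) with hK
  have hKpos : 0 < K := by rw [hK]; positivity
  have hT : ‖fZ - fZi‖ ≤ K ^ (1 / (m - 1)) := by
    have hTD : ‖fZ - fZi‖ = 2 * D := by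
      rw [hD, hd, norm_smul]
      norm_num
      ring
    rcases eq_or_lt_of_le hDnn with hD0 | hDpos
    · rw [hTD, ← hD0]
      norm_num
      positivity
    · -- divide by D
      have hDm : D ^ m = D ^ (m - 1) * D := by
        conv_lhs => rw [show m = m - 1 + 1 by ring]
        rw [Real.rpow_add hDpos, Real.rpow_one]
      have h6 : 2 * lam * D ^ (m - 1) * D ≤ ((1 / (n:ℝ)) * (C * κ)) * D := by
        calc 2 * lam * D ^ (m - 1) * D = 2 * lam * D ^ m := by rw [hDm]; ring
          _ ≤ (1 / (n:ℝ)) * (C * κ * D) := hstar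
          _ = ((1 / (n:ℝ)) * (C * κ)) * D := by ring
      have h7 : 2 * lam * D ^ (m - 1) ≤ (1 / (n:ℝ)) * (C * κ) :=
        le_of_mul_le_mul_right h6 hDpos
      have h8 : D ^ (m - 1) ≤ C * κ / (2 * lam * n) := by
        rw [le_div_iff₀ (by positivity)]
        calc D ^ (m - 1) * (2 * lam * n) = (2 * lam * D ^ (m - 1)) * n := by ring
          _ ≤ ((1 / (n:ℝ)) * (C * κ)) * n := mul_le_mul_of_nonneg_right h7 hn'.le
          _ = C * κ := by field_simp
      have h9 : (2 * D) ^ (m - 1) ≤ K := by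
        rw [Real.mul_rpow (by norm_num) hDnn]
        calc (2:ℝ) ^ (m - 1) * D ^ (m - 1)
            ≤ (2:ℝ) ^ (m - 1) * (C * κ / (2 * lam * n)) :=
              mul_le_mul_of_nonneg_left h8 (Real.rpow_nonneg (by norm_num) _)
          _ = K := by
              rw [show m - 1 = (m - 2) + 1 by ring, Real.rpow_add (by norm_num : (0:ℝ) < 2),
                Real.rpow_one, hK]
              field_simp
      have hm1' : (0:ℝ) ≤ 1 / (m - 1) := by
        have : (0:ℝ) < m - 1 := by linarith
        positivity
      have h10 : ((2 * D) ^ (m - 1)) ^ (1 / (m - 1)) ≤ K ^ (1 / (m - 1)) :=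
        Real.rpow_le_rpow (Real.rpow_nonneg (by positivity) _) h9 hm1'
      have h11 : ((2 * D) ^ (m - 1)) ^ (1 / (m - 1)) = 2 * D := by
        rw [← Real.rpow_mul (by positivity), mul_one_div_cancel (by linarith : m - 1 ≠ 0),
          Real.rpow_one]
      rw [hTD]
      rw [h11] at h10
      exact h10
  -- conclude
  intro φ₀ y₀ hφ₀ hy₀
  have heq : (y₀ - ⟪φ₀, fZ⟫) ^ 2 - (y₀ - ⟪φ₀, fZi⟫) ^ 2
      = (⟪φ₀, fZi⟫ - ⟪φ₀, fZ⟫) * (2 * y₀ - ⟪φ₀, fZ⟫ - ⟪φ₀, fZi⟫) := by ring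
  have hb1 : |⟪φ₀, fZi⟫ - ⟪φ₀, fZ⟫| ≤ κ * ‖fZ - fZi‖ := by
    rw [← inner_sub_right]
    have := (abs_real_inner_le_norm φ₀ (fZi - fZ)).trans
      (mul_le_mul_of_nonneg_right hφ₀ (norm_nonneg _))
    rwa [norm_sub_rev] at this
  have hb2 : |2 * y₀ - ⟪φ₀, fZ⟫ - ⟪φ₀, fZi⟫| ≤ C :=
    hbound2 φ₀ y₀ fZ fZi hφ₀ hy₀ hfZ_bd hfZi_bd
  calc |(y₀ - ⟪φ₀, fZ⟫) ^ 2 - (y₀ - ⟪φ₀, fZi⟫) ^ 2|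
      = |⟪φ₀, fZi⟫ - ⟪φ₀, fZ⟫| * |2 * y₀ - ⟪φ₀, fZ⟫ - ⟪φ₀, fZi⟫| := by
        rw [heq, abs_mul]
    _ ≤ (κ * ‖fZ - fZi‖) * C := mul_le_mul hb1 hb2 (abs_nonneg _) (by positivity)
    _ ≤ (κ * K ^ (1 / (m - 1))) * C :=
        mul_le_mul_of_nonneg_right (mul_le_mul_of_nonneg_left hT hκ.le) hCpos.le
    _ = β := by rw [hβ, hK]; ring
end

section
/- In a real inner product space, for every real m ≥ 2 and all vectors u and v, one has ‖u + v‖^m + ‖u − v‖^m ≥ 2·‖u‖^m + 2·‖v‖^m. -/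
open Real

lemma aux_rpow_superadd {a b p : ℝ} (ha : 0 ≤ a) (hb : 0 ≤ b) (hp : 1 ≤ p) :
    a ^ p + b ^ p ≤ (a + b) ^ p := by
  have := NNReal.add_rpow_le_rpow_add (⟨a, ha⟩ : NNReal) (⟨b, hb⟩ : NNReal) hp
  exact_mod_cast this

lemma aux_rpow_convex {a b p : ℝ} (ha : 0 ≤ a) (hb : 0 ≤ b) (hp : 1 ≤ p) :
    ((a + b) / 2) ^ p ≤ (a ^ p + b ^ p) / 2 := by
  have h := (_root_.convexOn_rpow hp).2 (Set.mem_Ici.mpr ha) (Set.mem_Ici.mpr hb)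
    (by norm_num : (0:ℝ) ≤ 1/2) (by norm_num : (0:ℝ) ≤ 1/2) (by norm_num)
  simp only [smul_eq_mul] at h
  calc ((a + b) / 2) ^ p = (1/2 * a + 1/2 * b) ^ p := by ring_nf
    _ ≤ 1/2 * a ^ p + 1/2 * b ^ p := h
    _ = (a ^ p + b ^ p) / 2 := by ring

/-- In a real inner product space, for every real `m ≥ 2` and all vectors `u`, `v`,
one has `‖u + v‖^m + ‖u − v‖^m ≥ 2·‖u‖^m + 2·‖v‖^m`. -/
theorem norm_rpow_parallelogram_ineq
    {V : Type*} [NormedAddCommGroup V] [InnerProductSpace ℝ V]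
    (m : ℝ) (hm : 2 ≤ m) (u v : V) :
    2 * ‖u‖ ^ m + 2 * ‖v‖ ^ m ≤ ‖u + v‖ ^ m + ‖u - v‖ ^ m := by
  set r : ℝ := m / 2 with hr_def
  have hr : 1 ≤ r := by rw [hr_def]; linarith
  have key : ∀ x : V, (‖x‖ ^ 2) ^ r = ‖x‖ ^ m := by
    intro x
    rw [← Real.rpow_natCast ‖x‖ 2, ← Real.rpow_mul (norm_nonneg x)]
    rw [hr_def]
    congr 1
    ring
  have hpar : ‖u + v‖ ^ 2 + ‖u - v‖ ^ 2 = 2 * (‖u‖ ^ 2 + ‖v‖ ^ 2) :=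
    by simpa [sq] using parallelogram_law_with_norm ℝ u v
  have sq_nonneg' : ∀ x : V, (0:ℝ) ≤ ‖x‖ ^ 2 := fun x => sq_nonneg _
  have h1 : ‖u‖ ^ m + ‖v‖ ^ m ≤ (‖u‖ ^ 2 + ‖v‖ ^ 2) ^ r := by
    rw [← key u, ← key v]
    exact aux_rpow_superadd (sq_nonneg' u) (sq_nonneg' v) hr
  have h2 : (‖u‖ ^ 2 + ‖v‖ ^ 2) ^ r ≤ (‖u + v‖ ^ m + ‖u - v‖ ^ m) / 2 := by
    have : (‖u‖ ^ 2 + ‖v‖ ^ 2 : ℝ) = (‖u + v‖ ^ 2 + ‖u - v‖ ^ 2) / 2 := by linarith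
    rw [this, ← key (u + v), ← key (u - v)]
    exact aux_rpow_convex (sq_nonneg' (u + v)) (sq_nonneg' (u - v)) hr
  linarith
end

section
/- Assume m > 1. Then the midpoint inequality |(y_i − ⟨φ_i, f_Z⟩)² − (y_i − ⟨φ_i, (f_Z + f_{Z^i})/2⟩)²| ≥ n·λ·(‖f_Z‖^m − 2·‖(f_Z + f_{Z^i})/2‖^m + ‖f_{Z^i}‖^m) holds between the minimizers on the full data and on the leave-one-out data. -/
open scoped RealInnerProductSpace BigOperators

/-- Midpoint inequality: with `m > 1`, the minimizers `fZ` (full data) and `fZi`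
(leave-one-out data) satisfy
`|(y i − ⟪φ i, fZ⟫)² − (y i − ⟪φ i, (fZ + fZi)/2⟫)²|
  ≥ n·λ·(‖fZ‖^m − 2·‖(fZ + fZi)/2‖^m + ‖fZi‖^m)`. -/
theorem mPower_RLSR_midpoint_inequality
    {H : Type*} [NormedAddCommGroup H] [InnerProductSpace ℝ H] [CompleteSpace H]
    (n : ℕ) (hn : 0 < n) (φ : Fin n → H) (y : Fin n → ℝ)
    (lam m : ℝ) (hlam : 0 < lam) (hm : 1 < m)
    (i : Fin n) (fZ fZi : H)
    (hfZ : ∀ g : H,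
      (1 / (n : ℝ)) * ∑ j, (y j - ⟪φ j, fZ⟫) ^ 2 + lam * ‖fZ‖ ^ m ≤
      (1 / (n : ℝ)) * ∑ j, (y j - ⟪φ j, g⟫) ^ 2 + lam * ‖g‖ ^ m)
    (hfZi : ∀ g : H,
      (1 / (n : ℝ)) * ∑ j ∈ Finset.univ.erase i, (y j - ⟪φ j, fZi⟫) ^ 2 + lam * ‖fZi‖ ^ m ≤
      (1 / (n : ℝ)) * ∑ j ∈ Finset.univ.erase i, (y j - ⟪φ j, g⟫) ^ 2 + lam * ‖g‖ ^ m) :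
    (n : ℝ) * lam *
        (‖fZ‖ ^ m - 2 * ‖(1 / 2 : ℝ) • (fZ + fZi)‖ ^ m + ‖fZi‖ ^ m) ≤
      |(y i - ⟪φ i, fZ⟫) ^ 2 - (y i - ⟪φ i, (1 / 2 : ℝ) • (fZ + fZi)⟫) ^ 2| := by
  set g : H := (1 / 2 : ℝ) • (fZ + fZi) with hg
  have hn' : (0 : ℝ) < n := by exact_mod_cast hn
  have hn0 : (n : ℝ) ≠ 0 := ne_of_gt hn'
  have h1 := hfZ g
  have h2 := hfZi g
  -- inner product at midpoint
  have hmid : ∀ j, ⟪φ j, g⟫ = (⟪φ j, fZ⟫ + ⟪φ j, fZi⟫) / 2 := by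
    intro j
    rw [hg, real_inner_smul_right, inner_add_right]
    ring
  -- per-term convexity
  have hconv : ∀ j, (y j - ⟪φ j, g⟫) ^ 2 ≤
      ((y j - ⟪φ j, fZ⟫) ^ 2 + (y j - ⟪φ j, fZi⟫) ^ 2) / 2 := by
    intro j
    rw [hmid j]
    nlinarith [sq_nonneg (⟪φ j, fZ⟫ - ⟪φ j, fZi⟫)]
  -- sums over erase
  have hE : ∑ j ∈ Finset.univ.erase i, (y j - ⟪φ j, g⟫) ^ 2 ≤
      (∑ j ∈ Finset.univ.erase i, (y j - ⟪φ j, fZ⟫) ^ 2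
        + ∑ j ∈ Finset.univ.erase i, (y j - ⟪φ j, fZi⟫) ^ 2) / 2 := by
    rw [← Finset.sum_add_distrib, Finset.sum_div]
    exact Finset.sum_le_sum fun j _ => hconv j
  -- split full sums
  have hsplitZ : ∑ j, (y j - ⟪φ j, fZ⟫) ^ 2 =
      ∑ j ∈ Finset.univ.erase i, (y j - ⟪φ j, fZ⟫) ^ 2 + (y i - ⟪φ i, fZ⟫) ^ 2 :=
    (Finset.sum_erase_add _ _ (Finset.mem_univ i)).symm
  have hsplitg : ∑ j, (y j - ⟪φ j, g⟫) ^ 2 =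
      ∑ j ∈ Finset.univ.erase i, (y j - ⟪φ j, g⟫) ^ 2 + (y i - ⟪φ i, g⟫) ^ 2 :=
    (Finset.sum_erase_add _ _ (Finset.mem_univ i)).symm
  -- multiply h1, h2 by n
  have h1' := mul_le_mul_of_nonneg_left h1 hn'.le
  have h2' := mul_le_mul_of_nonneg_left h2 hn'.le
  have hinv : (n : ℝ) * (1 / n) = 1 := by field_simp
  have key : (n : ℝ) * lam * (‖fZ‖ ^ m - 2 * ‖g‖ ^ m + ‖fZi‖ ^ m) ≤
      (y i - ⟪φ i, g⟫) ^ 2 - (y i - ⟪φ i, fZ⟫) ^ 2 := by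
    rw [hsplitZ, hsplitg] at h1'
    nlinarith [h1', h2', hE, hinv]
  calc (n : ℝ) * lam * (‖fZ‖ ^ m - 2 * ‖g‖ ^ m + ‖fZi‖ ^ m)
      ≤ (y i - ⟪φ i, g⟫) ^ 2 - (y i - ⟪φ i, fZ⟫) ^ 2 := key
    _ ≤ |(y i - ⟪φ i, fZ⟫) ^ 2 - (y i - ⟪φ i, g⟫) ^ 2| := by
        rw [abs_sub_comm]; exact le_abs_self _
end

section
/- Assume m > 1. Then for every t ∈ [0, 1], the minimizers f_Z and f_{Z^i} satisfy the combined minimality inequality (y_i − ⟨φ_i, f_Z⟩)² − (y_i − ⟨φ_i, f_Z + t·(f_{Z^i} − f_Z)⟩)² + λ·n·(‖f_Z‖^m − ‖f_Z + t·(f_{Z^i} − f_Z)‖^m + ‖f_{Z^i}‖^m − ‖f_{Z^i} + t·(f_Z − f_{Z^i})‖^m) ≤ 0. -/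
open scoped RealInnerProductSpace BigOperators

/-- Combined minimality inequality: with `m > 1`, for every `t ∈ [0, 1]`, the minimizers
`fZ` (full data) and `fZi` (leave-one-out data) satisfy
`(y i − ⟪φ i, fZ⟫)² − (y i − ⟪φ i, fZ + t(fZi − fZ)⟫)²
 + λ n (‖fZ‖^m − ‖fZ + t(fZi − fZ)‖^m + ‖fZi‖^m − ‖fZi + t(fZ − fZi)‖^m) ≤ 0`. -/
theorem mPower_RLSR_combined_minimality
    {H : Type*} [NormedAddCommGroup H] [InnerProductSpace ℝ H] [CompleteSpace H]
    (n : ℕ) (hn : 0 < n) (φ : Fin n → H) (y : Fin n → ℝ)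
    (lam m : ℝ) (hlam : 0 < lam) (hm : 1 < m)
    (i : Fin n) (fZ fZi : H)
    (hfZ : ∀ g : H,
      (1 / (n : ℝ)) * ∑ j, (y j - ⟪φ j, fZ⟫) ^ 2 + lam * ‖fZ‖ ^ m ≤
      (1 / (n : ℝ)) * ∑ j, (y j - ⟪φ j, g⟫) ^ 2 + lam * ‖g‖ ^ m)
    (hfZi : ∀ g : H,
      (1 / (n : ℝ)) * ∑ j ∈ Finset.univ.erase i, (y j - ⟪φ j, fZi⟫) ^ 2 + lam * ‖fZi‖ ^ m ≤
      (1 / (n : ℝ)) * ∑ j ∈ Finset.univ.erase i, (y j - ⟪φ j, g⟫) ^ 2 + lam * ‖g‖ ^ m) :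
    ∀ t ∈ Set.Icc (0 : ℝ) 1,
      (y i - ⟪φ i, fZ⟫) ^ 2 - (y i - ⟪φ i, fZ + t • (fZi - fZ)⟫) ^ 2 +
        lam * n * (‖fZ‖ ^ m - ‖fZ + t • (fZi - fZ)‖ ^ m +
          ‖fZi‖ ^ m - ‖fZi + t • (fZ - fZi)‖ ^ m) ≤ 0 := by
  rintro t ⟨ht0, ht1⟩
  set N : ℝ := (n : ℝ) with hNdef
  have hN : 0 < N := by simpa [hNdef] using (Nat.cast_pos.mpr hn : (0:ℝ) < n)
  set A : H := fZ + t • (fZi - fZ) with hA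
  set B : H := fZi + t • (fZ - fZi) with hB
  have hAin : ∀ j, ⟪φ j, A⟫ = ⟪φ j, fZ⟫ + t * (⟪φ j, fZi⟫ - ⟪φ j, fZ⟫) := by
    intro j
    simp [hA, inner_add_right, inner_smul_right, inner_sub_right]
  have hBin : ∀ j, ⟪φ j, B⟫ = ⟪φ j, fZi⟫ + t * (⟪φ j, fZ⟫ - ⟪φ j, fZi⟫) := by
    intro j
    simp [hB, inner_add_right, inner_smul_right, inner_sub_right]
  -- scale the two minimality inequalities by N
  have cancel : ∀ S : ℝ, N * (1 / N * S) = S := fun S => by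
    field_simp
  have h1 : (∑ j, (y j - ⟪φ j, fZ⟫) ^ 2) + lam * N * ‖fZ‖ ^ m ≤
      (∑ j, (y j - ⟪φ j, A⟫) ^ 2) + lam * N * ‖A‖ ^ m := by
    have h := mul_le_mul_of_nonneg_left (hfZ A) hN.le
    rw [mul_add, mul_add, cancel, cancel] at h
    nlinarith [h]
  have h2 : (∑ j ∈ Finset.univ.erase i, (y j - ⟪φ j, fZi⟫) ^ 2) + lam * N * ‖fZi‖ ^ m ≤
      (∑ j ∈ Finset.univ.erase i, (y j - ⟪φ j, B⟫) ^ 2) + lam * N * ‖B‖ ^ m := by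
    have h := mul_le_mul_of_nonneg_left (hfZi B) hN.le
    rw [mul_add, mul_add, cancel, cancel] at h
    nlinarith [h]
  -- split the full sums at i
  have hsplit1 : (∑ j, (y j - ⟪φ j, fZ⟫) ^ 2) =
      (y i - ⟪φ i, fZ⟫) ^ 2 + ∑ j ∈ Finset.univ.erase i, (y j - ⟪φ j, fZ⟫) ^ 2 :=
    (Finset.add_sum_erase _ _ (Finset.mem_univ i)).symm
  have hsplit2 : (∑ j, (y j - ⟪φ j, A⟫) ^ 2) =
      (y i - ⟪φ i, A⟫) ^ 2 + ∑ j ∈ Finset.univ.erase i, (y j - ⟪φ j, A⟫) ^ 2 :=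
    (Finset.add_sum_erase _ _ (Finset.mem_univ i)).symm
  -- convexity cancellation on the erased sums
  have key : (∑ j ∈ Finset.univ.erase i, (y j - ⟪φ j, A⟫) ^ 2) +
      (∑ j ∈ Finset.univ.erase i, (y j - ⟪φ j, B⟫) ^ 2) ≤
      (∑ j ∈ Finset.univ.erase i, (y j - ⟪φ j, fZ⟫) ^ 2) +
      (∑ j ∈ Finset.univ.erase i, (y j - ⟪φ j, fZi⟫) ^ 2) := by
    rw [← Finset.sum_add_distrib, ← Finset.sum_add_distrib]
    apply Finset.sum_le_sum
    intro j _
    rw [hAin j, hBin j]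
    nlinarith [mul_nonneg (mul_nonneg ht0 (sub_nonneg.2 ht1))
      (sq_nonneg (⟪φ j, fZ⟫ - ⟪φ j, fZi⟫))]
  rw [hsplit1, hsplit2] at h1
  nlinarith [h1, h2, key]
end
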